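/- Let b, c : ℝ → ℝ be smooth, take m ≡ 0, and let u : ℝ² → ℝ be a smooth solution of ∂ₜ²u − ∂ₓ²u + b(u)·∂ₜu + c(u)·∂ₓu = 0. Then the current generated by the time-translation symmetry characteristic p = −∂ₜu together with the adjoint-symmetry q = 1, namely Ψᵗ = −∂ₜ²u − b(u)·∂ₜu and Ψˣ = ∂ₜ∂ₓu − c(u)·∂ₜu, is locally trivial: with θ = C(u) − ∂ₓu one has Ψᵗ = ∂ₓθ and Ψˣ = −∂ₜθ on ℝ². -/

import Mathlib

noncomputable section

open Real

/-- Partial derivative in the first (time) variable. -/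
def Dt (u : ℝ → ℝ → ℝ) : ℝ → ℝ → ℝ := fun t x => deriv (fun s => u s x) t

/-- Partial derivative in the second (space) variable. -/
def Dx (u : ℝ → ℝ → ℝ) : ℝ → ℝ → ℝ := fun t x => deriv (fun s => u t s) x

/-- Smoothness (C^∞) of a function of two real variables. -/
def Smooth2 (u : ℝ → ℝ → ℝ) : Prop := ContDiff ℝ (⊤ : ℕ∞) (fun p : ℝ × ℝ => u p.1 p.2)

lemma hasDerivAt_snd_slice {V : ℝ × ℝ → ℝ} (hV : ContDiff ℝ (⊤ : ℕ∞) V) (t x : ℝ) :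
    HasDerivAt (fun s => V (t, s)) (fderiv ℝ V (t, x) (0, 1)) x := by
  have h1 : HasDerivAt (fun s : ℝ => ((t, s) : ℝ × ℝ)) (0, 1) x :=
    HasDerivAt.prodMk (hasDerivAt_const x t) (hasDerivAt_id x)
  exact ((hV.differentiable (by norm_num) (t, x)).hasFDerivAt).comp_hasDerivAt x h1

lemma hasDerivAt_fst_slice {V : ℝ × ℝ → ℝ} (hV : ContDiff ℝ (⊤ : ℕ∞) V) (t x : ℝ) :
    HasDerivAt (fun s => V (s, x)) (fderiv ℝ V (t, x) (1, 0)) t := by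
  have h1 : HasDerivAt (fun s : ℝ => ((s, x) : ℝ × ℝ)) (1, 0) t :=
    HasDerivAt.prodMk (hasDerivAt_id t) (hasDerivAt_const t x)
  exact ((hV.differentiable (by norm_num) (t, x)).hasFDerivAt).comp_hasDerivAt t h1

/-- For m ≡ 0, the current generated by the time-translation characteristic
p = −∂ₜu and adjoint-symmetry q = 1 is locally trivial: (Ψᵗ, Ψˣ) = (∂ₓθ, −∂ₜθ)
with θ = C(u) − ∂ₓu. -/
theorem stmt_12
    (b c : ℝ → ℝ) (hb : ContDiff ℝ (⊤ : ℕ∞) b) (hc : ContDiff ℝ (⊤ : ℕ∞) c)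
    (C : ℝ → ℝ) (hC : ∀ y, C y = ∫ s in (0:ℝ)..y, c s)
    (u : ℝ → ℝ → ℝ) (hu : Smooth2 u)
    (hsol : ∀ t x,
      Dt (Dt u) t x - Dx (Dx u) t x + b (u t x) * Dt u t x + c (u t x) * Dx u t x = 0) :
    (∀ t x : ℝ,
      -(Dt (Dt u) t x) - b (u t x) * Dt u t x
        = Dx (fun t x => C (u t x) - Dx u t x) t x)
    ∧ (∀ t x : ℝ,
      Dt (Dx u) t x - c (u t x) * Dt u t x
        = -(Dt (fun t x => C (u t x) - Dx u t x) t x)) := by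
  have hU : ContDiff ℝ (⊤ : ℕ∞) (fun p : ℝ × ℝ => u p.1 p.2) := hu
  set U : ℝ × ℝ → ℝ := fun p => u p.1 p.2 with hUdef
  -- FTC: C has derivative c
  have hC' : ∀ y, HasDerivAt C (c y) y := by
    intro y
    have h := (hc.continuous.integral_hasStrictDerivAt 0 y).hasDerivAt
    have : (fun z => ∫ s in (0:ℝ)..z, c s) = C := by
      funext z; exact (hC z).symm
    rwa [this] at h
  -- the second partial as a smooth 2-variable function
  set Vx : ℝ × ℝ → ℝ := fun p => fderiv ℝ U p (0, 1) with hVxdef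
  have hVx : ContDiff ℝ (⊤ : ℕ∞) Vx := by
    have h1 : ContDiff ℝ (⊤ : ℕ∞) (fderiv ℝ U) := by
      exact (hU.fderiv_right (m := (⊤ : ℕ∞)) (by exact_mod_cast le_top))
    exact h1.clm_apply contDiff_const
  have hDxeq : ∀ t x, Dx u t x = Vx (t, x) := fun t x =>
    (hasDerivAt_snd_slice hU t x).deriv
  have hDteq : ∀ t x, Dt u t x = fderiv ℝ U (t, x) (1, 0) := fun t x =>
    (hasDerivAt_fst_slice hU t x).deriv
  -- derivative of the x-slice of θ
  have key1 : ∀ t x, HasDerivAt (fun s => C (u t s) - Dx u t s)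
      (c (u t x) * Dx u t x - Dx (Dx u) t x) x := by
    intro t x
    have hslice : HasDerivAt (fun s => u t s) (Dx u t x) x := by
      rw [hDxeq]; exact hasDerivAt_snd_slice hU t x
    have h1 : HasDerivAt (fun s => C (u t s)) (c (u t x) * Dx u t x) x :=
      (hC' (u t x)).comp x hslice
    have h2 : HasDerivAt (fun s => Dx u t s) (Dx (Dx u) t x) x := by
      have h3 : HasDerivAt (fun s => Vx (t, s)) (fderiv ℝ Vx (t, x) (0, 1)) x :=
        hasDerivAt_snd_slice hVx t x
      have h4 : (fun s => Vx (t, s)) = fun s => Dx u t s := by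
        funext s; exact (hDxeq t s).symm
      rw [h4] at h3
      have : Dx (Dx u) t x = fderiv ℝ Vx (t, x) (0, 1) := h3.deriv
      rw [this]; exact h3
    exact h1.sub h2
  have key2 : ∀ t x, HasDerivAt (fun s => C (u s x) - Dx u s x)
      (c (u t x) * Dt u t x - Dt (Dx u) t x) t := by
    intro t x
    have hslice : HasDerivAt (fun s => u s x) (Dt u t x) t := by
      rw [hDteq]; exact hasDerivAt_fst_slice hU t x
    have h1 : HasDerivAt (fun s => C (u s x)) (c (u t x) * Dt u t x) t :=
      (hC' (u t x)).comp t hslice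
    have h2 : HasDerivAt (fun s => Dx u s x) (Dt (Dx u) t x) t := by
      have h3 : HasDerivAt (fun s => Vx (s, x)) (fderiv ℝ Vx (t, x) (1, 0)) t :=
        hasDerivAt_fst_slice hVx t x
      have h4 : (fun s => Vx (s, x)) = fun s => Dx u s x := by
        funext s; exact (hDxeq s x).symm
      rw [h4] at h3
      have : Dt (Dx u) t x = fderiv ℝ Vx (t, x) (1, 0) := h3.deriv
      rw [this]; exact h3
    exact h1.sub h2
  constructor
  · intro t x
    have h := (key1 t x).deriv
    have hs := hsol t x
    show _ = deriv (fun s => C (u t s) - Dx u t s) x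
    rw [h]; linarith
  · intro t x
    have h := (key2 t x).deriv
    show _ = -(deriv (fun s => C (u s x) - Dx u s x) t)
    rw [h]; ring
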